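/- arXiv:2211.14778 — 2 statements merged into one kernel-verified Lean document; each statement's English description precedes it below -/
import Mathlib

section
/- Let G be a finite group and C a closed twin class of P(G) of plain type (a single ⋄-class) such that |C| = p^r − p^s and |Ĉ| = p^r for some prime p and integers r ≥ 2, 0 ≤ s ≤ r−2. Then Ĉ = C ∪ {1} (disjoint union), s = 0, and C = [y]_⋄ for some y ∈ G with o(y) > 1 not a prime power and φ(o(y)) = p^r − 1. -/
/-- Closed neighbourhood of a vertex. -/
def closedNbhd {V : Type*} (Γ : SimpleGraph V) (x : V) : Set V := {y | Γ.Adj x y} ∪ {x}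

/-- Closed neighbourhood of a set of vertices (intersection convention; N[∅] = univ). -/
def closedNbhdSet {V : Type*} (Γ : SimpleGraph V) (X : Set V) : Set V :=
  ⋂ x ∈ X, closedNbhd Γ x

/-- Neighbourhood closure X̂ = N[N[X]]. -/
def nbhdClosure {V : Type*} (Γ : SimpleGraph V) (X : Set V) : Set V :=
  closedNbhdSet Γ (closedNbhdSet Γ X)

/-- Closed twin class of a vertex. -/
def twinClass {V : Type*} (Γ : SimpleGraph V) (y : V) : Set V :=
  {x | closedNbhd Γ x = closedNbhd Γ y}

/-- The power graph of a group. -/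
def powerGraph (G : Type*) [Group G] : SimpleGraph G where
  Adj x y := x ≠ y ∧ ((∃ m : ℕ, 0 < m ∧ y = x ^ m) ∨ (∃ m : ℕ, 0 < m ∧ x = y ^ m))
  symm := ⟨by rintro x y ⟨h, h2⟩; exact ⟨h.symm, h2.symm⟩⟩
  loopless := ⟨by rintro x ⟨h, _⟩; exact h rfl⟩

/-- The ⋄-class of an element: elements generating the same cyclic subgroup. -/
def diamondClass {G : Type*} [Group G] (y : G) : Set G :=
  {x | Subgroup.zpowers x = Subgroup.zpowers y}

section Helpers

variable {G : Type*} [Group G] [Fintype G]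

lemma exists_pos_pow_of_mem_zpowers {x z : G} (h : z ∈ Subgroup.zpowers x) :
    ∃ m : ℕ, 0 < m ∧ z = x ^ m := by
  obtain ⟨m, hm⟩ := mem_powers_iff_mem_zpowers.mpr h
  have hm' : x ^ m = z := hm
  rcases Nat.eq_zero_or_pos m with rfl | hm0
  · exact ⟨orderOf x, orderOf_pos x, by rw [pow_orderOf_eq_one, ← hm', pow_zero]⟩
  · exact ⟨m, hm0, hm'.symm⟩

lemma mem_closedNbhd_iff {x z : G} :
    z ∈ closedNbhd (powerGraph G) x ↔ (z ∈ Subgroup.zpowers x ∨ x ∈ Subgroup.zpowers z) := by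
  simp only [closedNbhd, Set.mem_union, Set.mem_setOf_eq, Set.mem_singleton_iff]
  constructor
  · rintro (⟨hne, (⟨m, _, rfl⟩ | ⟨m, _, hx⟩)⟩ | rfl)
    · exact Or.inl (Subgroup.pow_mem _ (Subgroup.mem_zpowers x) m)
    · exact Or.inr (hx ▸ Subgroup.pow_mem _ (Subgroup.mem_zpowers z) m)
    · exact Or.inl (Subgroup.mem_zpowers _)
  · intro h
    by_cases hzx : z = x
    · exact Or.inr hzx
    · left
      refine ⟨fun hxz => hzx hxz.symm, ?_⟩
      rcases h with h | h
      · obtain ⟨m, hm0, hm⟩ := exists_pos_pow_of_mem_zpowers h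
        exact Or.inl ⟨m, hm0, hm⟩
      · obtain ⟨m, hm0, hm⟩ := exists_pos_pow_of_mem_zpowers h
        exact Or.inr ⟨m, hm0, hm⟩

lemma closedNbhdSet_diamond (w : G) :
    closedNbhdSet (powerGraph G) (diamondClass w) =
      {y | y ∈ Subgroup.zpowers w ∨ w ∈ Subgroup.zpowers y} := by
  ext y
  simp only [closedNbhdSet, Set.mem_iInter, Set.mem_setOf_eq]
  constructor
  · intro h
    have := h w rfl
    rwa [mem_closedNbhd_iff] at this
  · intro h x hx
    replace hx : Subgroup.zpowers x = Subgroup.zpowers w := hx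
    rw [mem_closedNbhd_iff]
    rcases h with h | h
    · exact Or.inl (by rw [hx]; exact h)
    · exact Or.inr ((Subgroup.zpowers_le.mpr h) (hx ▸ Subgroup.mem_zpowers x))

lemma mem_nbhdClosure_diamond {w z : G} :
    z ∈ nbhdClosure (powerGraph G) (diamondClass w) ↔
      ∀ y : G, (y ∈ Subgroup.zpowers w ∨ w ∈ Subgroup.zpowers y) →
        (z ∈ Subgroup.zpowers y ∨ y ∈ Subgroup.zpowers z) := by
  unfold nbhdClosure
  rw [closedNbhdSet_diamond]
  simp only [closedNbhdSet, Set.mem_iInter, Set.mem_setOf_eq]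
  constructor
  · intro h y hy
    have := h y hy
    rwa [mem_closedNbhd_iff] at this
  · intro h y hy
    rw [mem_closedNbhd_iff]
    exact h y hy

/-- In the cyclic group generated by `w`, order divisibility gives membership. -/
lemma mem_zpowers_of_orderOf_dvd {w y z : G} (hy : y ∈ Subgroup.zpowers w)
    (hz : z ∈ Subgroup.zpowers w) (h : orderOf y ∣ orderOf z) : y ∈ Subgroup.zpowers z := by
  obtain ⟨a, ha⟩ := mem_powers_iff_mem_zpowers.mpr hy
  obtain ⟨b, hb⟩ := mem_powers_iff_mem_zpowers.mpr hz
  have ha' : y = w ^ a := (show w ^ a = y from ha).symm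
  have hb' : z = w ^ b := (show w ^ b = z from hb).symm
  rw [ha', hb'] at h ⊢
  clear ha hb ha' hb' hy hz
  set n := orderOf w with hn
  have hn0 : n ≠ 0 := (orderOf_pos w).ne'
  have hga : orderOf (w ^ a) = n / Nat.gcd n a := orderOf_pow w
  have hgb : orderOf (w ^ b) = n / Nat.gcd n b := orderOf_pow w
  set ga := Nat.gcd n a with hga_def
  set gb := Nat.gcd n b with hgb_def
  have hga_dvd : ga ∣ n := Nat.gcd_dvd_left n a
  have hgb_dvd : gb ∣ n := Nat.gcd_dvd_left n b
  have h' : n / ga ∣ n / gb := by rwa [hga, hgb] at h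
  have hgb_ga : gb ∣ ga := by
    obtain ⟨k, hk⟩ := h'
    have h1 : ga * (n / ga) = n := Nat.mul_div_cancel' hga_dvd
    have h2 : gb * (n / gb) = n := Nat.mul_div_cancel' hgb_dvd
    have hpos : 0 < n / ga := Nat.div_pos (Nat.le_of_dvd (Nat.pos_of_ne_zero hn0) hga_dvd)
      (Nat.pos_of_ne_zero fun h0 => hn0 (by rw [← h1, h0, zero_mul]))
    refine ⟨k, ?_⟩
    have hmul : gb * k * (n / ga) = ga * (n / ga) := by
      calc gb * k * (n / ga) = gb * (n / ga * k) := by ring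
      _ = gb * (n / gb) := by rw [← hk]
      _ = ga * (n / ga) := by rw [h2, h1]
    exact (Nat.eq_of_mul_eq_mul_right hpos hmul).symm
  have hgb_a : gb ∣ a := hgb_ga.trans (Nat.gcd_dvd_right n a)
  have hkey : w ^ gb ∈ Subgroup.zpowers (w ^ b) := by
    rw [Subgroup.mem_zpowers_iff]
    refine ⟨Nat.gcdB n b, ?_⟩
    have hbez := Nat.gcd_eq_gcd_ab n b
    have h1 : (w : G) ^ ((n : ℤ) * Nat.gcdA n b) = 1 := by
      rw [zpow_mul, zpow_natCast, pow_orderOf_eq_one, one_zpow]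
    calc (w ^ b) ^ Nat.gcdB n b = w ^ ((b : ℤ) * Nat.gcdB n b) := by
          rw [← zpow_natCast w b, ← zpow_mul]
    _ = w ^ ((n : ℤ) * Nat.gcdA n b + (b : ℤ) * Nat.gcdB n b) := by
          rw [zpow_add, h1, one_mul]
    _ = w ^ ((gb : ℤ)) := by rw [hgb_def, hbez]
    _ = w ^ gb := zpow_natCast w gb
  obtain ⟨c, hc⟩ := hgb_a
  have : w ^ a = (w ^ gb) ^ c := by rw [← pow_mul, ← hc]
  rw [this]
  exact Subgroup.pow_mem _ hkey c

lemma isCyclic_zpowers (u : G) : IsCyclic ↥(Subgroup.zpowers u) := by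
  refine ⟨⟨⟨u, Subgroup.mem_zpowers u⟩, fun x => ?_⟩⟩
  obtain ⟨k, hk⟩ := Subgroup.mem_zpowers_iff.mp x.2
  exact ⟨k, Subtype.ext ((SubgroupClass.coe_zpow ⟨u, Subgroup.mem_zpowers u⟩ k).trans hk)⟩

lemma ncard_diamondClass (u : G) : (diamondClass u).ncard = (orderOf u).totient := by
  classical
  have hcyc : IsCyclic ↥(Subgroup.zpowers u) := isCyclic_zpowers u
  letI : Fintype ↥(Subgroup.zpowers u) := Fintype.ofFinite _
  have hcardH : Fintype.card ↥(Subgroup.zpowers u) = orderOf u := by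
    rw [← Nat.card_eq_fintype_card, Nat.card_zpowers]
  have e : ↥(diamondClass u) ≃ {a : ↥(Subgroup.zpowers u) // orderOf a = orderOf u} := by
    refine ⟨fun x => ⟨⟨x.1, by rw [← x.2]; exact Subgroup.mem_zpowers _⟩, ?_⟩,
      fun a => ⟨(a.1 : G), ?_⟩, fun x => Subtype.ext rfl, fun a => Subtype.ext (Subtype.ext rfl)⟩
    · rw [Subgroup.orderOf_mk]
      have h1 : orderOf (x.1 : G) = Nat.card (Subgroup.zpowers (x.1 : G)) :=
        (Nat.card_zpowers _).symm
      rw [h1, x.2, Nat.card_zpowers]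
    · have hmem : (a.1 : G) ∈ Subgroup.zpowers u := a.1.2
      have hord : orderOf u ∣ orderOf (a.1 : G) := by
        rw [Subgroup.orderOf_coe, a.2]
      exact le_antisymm (Subgroup.zpowers_le.mpr hmem)
        (Subgroup.zpowers_le.mpr (mem_zpowers_of_orderOf_dvd (Subgroup.mem_zpowers u) hmem hord))
  calc (diamondClass u).ncard = Nat.card ↥(diamondClass u) := (Nat.card_coe_set_eq _).symm
  _ = Nat.card {a : ↥(Subgroup.zpowers u) // orderOf a = orderOf u} := Nat.card_congr e
  _ = Fintype.card {a : ↥(Subgroup.zpowers u) // orderOf a = orderOf u} :=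
        Nat.card_eq_fintype_card
  _ = (Finset.univ.filter fun a : ↥(Subgroup.zpowers u) => orderOf a = orderOf u).card :=
        Fintype.card_subtype _
  _ = (orderOf u).totient := IsCyclic.card_orderOf_eq_totient (hcardH ▸ dvd_rfl)

lemma ncard_zpowers_coe (u : G) : ((Subgroup.zpowers u : Subgroup G) : Set G).ncard = orderOf u := by
  rw [← Nat.card_coe_set_eq]
  rw [SetLike.coe_sort_coe]
  exact Nat.card_zpowers u

end Helpers

theorem stmt13 {G : Type*} [Group G] [Fintype G] (C : Set G) (w : G)
    (hC : C = twinClass (powerGraph G) w) (hplain : C = diamondClass w)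
    (p r s : ℕ) (hp : p.Prime) (hr : 2 ≤ r) (hs : s ≤ r - 2)
    (hcard : C.ncard = p ^ r - p ^ s)
    (hclcard : (nbhdClosure (powerGraph G) C).ncard = p ^ r) :
    nbhdClosure (powerGraph G) C = C ∪ {1} ∧ (1 : G) ∉ C ∧ s = 0 ∧
      ∃ y : G, C = diamondClass y ∧ 1 < orderOf y ∧ ¬ IsPrimePow (orderOf y) ∧
        (orderOf y).totient = p ^ r - 1 := by
  classical
  subst hplain
  clear hC
  -- basic arithmetic facts
  have hp2 : 2 ≤ p := hp.two_le
  have hsr : s + 2 ≤ r := by omega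
  have h4 : p ^ s * 4 ≤ p ^ r := by
    calc p ^ s * 4 ≤ p ^ s * p ^ 2 := by
          have : (4 : ℕ) = 2 ^ 2 := by norm_num
          exact Nat.mul_le_mul_left _ (this ▸ Nat.pow_le_pow_left hp2 2)
    _ ≤ p ^ s * p ^ (r - s) := Nat.mul_le_mul_left _
          (Nat.pow_le_pow_right (by omega) (by omega))
    _ = p ^ r := by rw [← pow_add]; congr 1; omega
  have hps_pos : 0 < p ^ s := Nat.pow_pos (by omega)
  have hpr_pos : 0 < p ^ r := Nat.pow_pos (by omega)
  have hpsr : p ^ s ≤ p ^ r := by omega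
  -- w ≠ 1
  have hw1 : w ≠ 1 := by
    rintro rfl
    have hone : diamondClass (1 : G) = {1} := by
      ext x
      simp only [diamondClass, Set.mem_setOf_eq, Set.mem_singleton_iff,
        Subgroup.zpowers_one_eq_bot, Subgroup.zpowers_eq_bot]
    rw [hone, Set.ncard_singleton] at hcard
    omega
  set n := orderOf w with hn_def
  have hn_pos : 0 < n := orderOf_pos w
  have hn1 : 1 < n := by
    have hne1 : n ≠ 1 := by
      intro h
      rw [hn_def] at h
      exact hw1 (orderOf_eq_one_iff.mp h)
    omega
  have hcard' : n.totient = p ^ r - p ^ s := by rw [← ncard_diamondClass w]; exact hcard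
  set T := nbhdClosure (powerGraph G) (diamondClass w) with hT_def
  -- memberships
  have hmemT : ∀ z : G, z ∈ T ↔ ∀ y : G,
      (y ∈ Subgroup.zpowers w ∨ w ∈ Subgroup.zpowers y) →
      (z ∈ Subgroup.zpowers y ∨ y ∈ Subgroup.zpowers z) := fun z => mem_nbhdClosure_diamond
  have h1T : (1 : G) ∈ T := (hmemT 1).mpr fun y _ => Or.inl (one_mem _)
  have hclassT : ∀ u : G, u ∈ T → diamondClass u ⊆ T := by
    intro u hu x hx
    replace hx : Subgroup.zpowers x = Subgroup.zpowers u := hx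
    rw [hmemT]
    intro y hy
    rcases (hmemT u).mp hu y hy with h | h
    · exact Or.inl ((Subgroup.zpowers_le.mpr h) (hx ▸ Subgroup.mem_zpowers x))
    · exact Or.inr (by rw [hx]; exact h)
  have hwT : w ∈ T := (hmemT w).mpr (fun y hy => by
    rcases hy with h | h
    · exact Or.inr h
    · exact Or.inl h)
  have hCT : diamondClass w ⊆ T := hclassT w hwT
  have h1C : (1 : G) ∉ diamondClass w := by
    intro h
    replace h : Subgroup.zpowers (1 : G) = Subgroup.zpowers w := h
    rw [Subgroup.zpowers_one_eq_bot] at h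
    exact hw1 (Subgroup.zpowers_eq_bot.mp h.symm)
  -- no elements strictly above w
  have hupper : ∀ z ∈ T, w ∈ Subgroup.zpowers z → z ∈ Subgroup.zpowers w := by
    intro z hzT hwz
    by_contra hzw
    have hzne : Subgroup.zpowers z ≠ Subgroup.zpowers w := fun h =>
      hzw (h ▸ Subgroup.mem_zpowers z)
    have hz1 : z ≠ 1 := by
      rintro rfl
      have hb : w ∈ (⊥ : Subgroup G) := by
        rw [← Subgroup.zpowers_one_eq_bot]; exact hwz
      exact hw1 (Subgroup.mem_bot.mp hb)
    have hDT : diamondClass z ⊆ T := hclassT z hzT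
    have hnd : n ∣ orderOf z := orderOf_dvd_of_mem_zpowers hwz
    have hm_pos : 0 < (orderOf z).totient := Nat.totient_pos.mpr (orderOf_pos z)
    have hφle : n.totient ≤ (orderOf z).totient :=
      Nat.le_of_dvd hm_pos (Nat.totient_dvd_of_dvd hnd)
    have hdisj1 : Disjoint (diamondClass w) ({1} : Set G) := by
      rw [Set.disjoint_singleton_right]; exact h1C
    have hdisj2 : Disjoint (diamondClass w) (diamondClass z) := by
      rw [Set.disjoint_left]
      intro x hx hx'
      exact hzne ((show Subgroup.zpowers x = Subgroup.zpowers z from hx').symm.trans hx)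
    have hdisj3 : Disjoint ({1} : Set G) (diamondClass z) := by
      rw [Set.disjoint_singleton_left]
      intro h
      replace h : Subgroup.zpowers (1 : G) = Subgroup.zpowers z := h
      rw [Subgroup.zpowers_one_eq_bot] at h
      exact hz1 (Subgroup.zpowers_eq_bot.mp h.symm)
    have hsub : diamondClass w ∪ ({1} ∪ diamondClass z) ⊆ T := by
      refine Set.union_subset hCT (Set.union_subset ?_ hDT)
      intro x hx; rw [Set.mem_singleton_iff] at hx; subst hx; exact h1T
    have hcount : (diamondClass w ∪ ({1} ∪ diamondClass z)).ncard ≤ p ^ r := by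
      rw [← hclcard]
      exact Set.ncard_le_ncard hsub (Set.toFinite _)
    rw [Set.ncard_union_eq (by
        refine Set.disjoint_union_right.mpr ⟨hdisj1, hdisj2⟩) (Set.toFinite _) (Set.toFinite _),
      Set.ncard_union_eq hdisj3 (Set.toFinite _) (Set.toFinite _),
      Set.ncard_singleton, ncard_diamondClass, ncard_diamondClass] at hcount
    rw [hcard'] at hcount
    omega
  have hTsub : ∀ z ∈ T, z ∈ Subgroup.zpowers w := by
    intro z hzT
    rcases (hmemT z).mp hzT w (Or.inl (Subgroup.mem_zpowers w)) with h | h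
    · exact h
    · exact hupper z hzT h
  -- prime power order forces the whole cyclic group inside T
  have hpp_sub : ∀ q k : ℕ, q.Prime → n = q ^ k →
      ∀ z' ∈ Subgroup.zpowers w, z' ∈ T := by
    intro q k hq hnqk z' hz'
    rw [hmemT]
    intro y hy
    rcases hy with hy | hy
    · have hdy : orderOf y ∣ n := orderOf_dvd_of_mem_zpowers hy
      have hdz : orderOf z' ∣ n := orderOf_dvd_of_mem_zpowers hz'
      rw [hnqk] at hdy hdz
      obtain ⟨a, _, ha⟩ := (Nat.dvd_prime_pow hq).mp hdy
      obtain ⟨b, _, hb⟩ := (Nat.dvd_prime_pow hq).mp hdz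
      rcases le_total a b with hab | hab
      · refine Or.inr (mem_zpowers_of_orderOf_dvd hy hz' ?_)
        rw [ha, hb]; exact pow_dvd_pow q hab
      · refine Or.inl (mem_zpowers_of_orderOf_dvd hz' hy ?_)
        rw [ha, hb]; exact pow_dvd_pow q hab
    · exact Or.inl ((Subgroup.zpowers_le.mpr hy) hz')
  by_cases hmid : ∀ z ∈ T, Subgroup.zpowers z = Subgroup.zpowers w ∨ z = 1
  · -- Case (i): T = C ∪ {1}
    have hTeq : T = diamondClass w ∪ {1} := by
      apply subset_antisymm
      · intro z hz
        rcases hmid z hz with h | h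
        · exact Or.inl h
        · exact Or.inr h
      · refine Set.union_subset hCT ?_
        intro x hx; rw [Set.mem_singleton_iff] at hx; subst hx; exact h1T
    have hcount : p ^ r = n.totient + 1 := by
      conv_lhs => rw [← hclcard]
      rw [hTeq, Set.ncard_union_eq (Set.disjoint_singleton_right.mpr h1C)
        (Set.toFinite _) (Set.toFinite _), Set.ncard_singleton, ncard_diamondClass, hn_def]
    rw [hcard'] at hcount
    have hps1 : p ^ s = 1 := by omega
    have hs0 : s = 0 := by
      by_contra h
      have := Nat.one_lt_pow h (show 1 < p by omega)
      omega
    have hnpp : ¬ IsPrimePow n := by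
      rintro ⟨q, k, hqp, hk, hqk⟩
      have hq : q.Prime := Nat.prime_iff.mpr hqp
      have hsub : ((Subgroup.zpowers w : Subgroup G) : Set G) ⊆ T :=
        fun z' hz' => hpp_sub q k hq hqk.symm z' hz'
      have hle : n ≤ p ^ r := by
        rw [hn_def, ← hclcard, ← ncard_zpowers_coe w]
        exact Set.ncard_le_ncard hsub (Set.toFinite _)
      have hφ : n.totient = p ^ r - 1 := by rw [hcard', hps1]
      have hq2 : 2 ≤ q := hq.two_le
      have hφq : n.totient = q ^ (k - 1) * (q - 1) := by
        rw [← hqk]; exact Nat.totient_prime_pow hq hk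
      have hqk_split : q ^ (k - 1) * (q - 1) + q ^ (k - 1) = n := by
        have h1 : q - 1 + 1 = q := by omega
        calc q ^ (k - 1) * (q - 1) + q ^ (k - 1) = q ^ (k - 1) * (q - 1 + 1) := by ring
        _ = q ^ (k - 1) * q := by rw [h1]
        _ = q ^ (k - 1 + 1) := (pow_succ q (k - 1)).symm
        _ = q ^ k := by congr 1; omega
        _ = n := hqk
      have hQpos : 0 < q ^ (k - 1) := Nat.pow_pos (by omega)
      have hQ1 : q ^ (k - 1) = 1 := by omega
      have hk1 : k = 1 := by
        by_contra h
        have hk2 : k - 1 ≠ 0 := by omega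
        have := Nat.one_lt_pow hk2 (show 1 < q by omega)
        omega
      have hnq : n = q := by rw [← hqk, hk1, pow_one]
      have hφq' : q - 1 = p ^ r - 1 := by rw [← hφ, hnq, Nat.totient_prime hq]
      have hqpr : q = p ^ r := by omega
      have hpq : p = q := by
        have : p ∣ q := hqpr ▸ dvd_pow_self p (by omega : r ≠ 0)
        exact ((Nat.prime_dvd_prime_iff_eq hp hq).mp this)
      have h11 : p ^ 1 = p ^ r := by rw [pow_one]; exact hpq.trans hqpr
      have := Nat.pow_right_injective hp2 h11
      omega
    refine ⟨hTeq, h1C, hs0, w, rfl, hn1, hnpp, by rw [hcard', hps1]⟩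
  · -- Case (ii): an intermediate element exists; leads to contradiction
    exfalso
    push_neg at hmid
    obtain ⟨z, hzT, hzne, hz1⟩ := hmid
    have hzZw : z ∈ Subgroup.zpowers w := hTsub z hzT
    set d := orderOf z with hd_def
    have hd_dvd : d ∣ n := orderOf_dvd_of_mem_zpowers hzZw
    have hd1 : 1 < d := by
      have hd_pos : 0 < d := orderOf_pos z
      have hne1 : d ≠ 1 := by
        intro h
        rw [hd_def] at h
        exact hz1 (orderOf_eq_one_iff.mp h)
      omega
    have hdn : d ≠ n := by
      intro h
      have : w ∈ Subgroup.zpowers z :=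
        mem_zpowers_of_orderOf_dvd (Subgroup.mem_zpowers w) hzZw
          (by rw [← hn_def, ← hd_def, h])
      exact hzne (le_antisymm (Subgroup.zpowers_le.mpr hzZw) (Subgroup.zpowers_le.mpr this))
    have hn0 : n ≠ 0 := by omega
    have hd0 : d ≠ 0 := by omega
    have hcmp : ∀ e, e ∣ n → e ∣ d ∨ d ∣ e := by
      intro e he
      have hy_mem : w ^ (n / e) ∈ Subgroup.zpowers w :=
        Subgroup.pow_mem _ (Subgroup.mem_zpowers w) _
      have hy_ord : orderOf (w ^ (n / e)) = e := orderOf_pow_orderOf_div hn0 he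
      rcases (hmemT z).mp hzT (w ^ (n / e)) (Or.inl hy_mem) with h | h
      · exact Or.inr (hy_ord ▸ orderOf_dvd_of_mem_zpowers h)
      · exact Or.inl (hy_ord ▸ orderOf_dvd_of_mem_zpowers h)
    -- find the prime q0
    have hnd_div : n / d ≠ 1 := by
      intro h
      have := Nat.eq_mul_of_div_eq_right hd_dvd h
      omega
    have hnd_ne : n / d ≠ 0 := by
      have hmd : d * (n / d) = n := Nat.mul_div_cancel' hd_dvd
      intro h
      rw [h, mul_zero] at hmd
      omega
    set q0 := (n / d).minFac with hq0_def
    have hq0 : q0.Prime := Nat.minFac_prime hnd_div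
    have hq0_dvd_nd : q0 ∣ n / d := Nat.minFac_dvd _
    have hdq0_dvd : d * q0 ∣ n := by
      obtain ⟨c, hc⟩ := hq0_dvd_nd
      exact ⟨c, by rw [← Nat.mul_div_cancel' hd_dvd, hc, mul_assoc]⟩
    set e0 := q0 ^ (n.factorization q0) with he0_def
    have he0_dvd : e0 ∣ n := Nat.ordProj_dvd n q0
    have he0_not_dvd_d : ¬ e0 ∣ d := by
      intro hcon
      have h1 : q0 ^ (d.factorization q0 + 1) ∣ n := by
        calc q0 ^ (d.factorization q0 + 1) = q0 ^ (d.factorization q0) * q0 := pow_succ q0 _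
        _ ∣ d * q0 := mul_dvd_mul (Nat.ordProj_dvd d q0) dvd_rfl
        _ ∣ n := hdq0_dvd
      have h2 : d.factorization q0 + 1 ≤ n.factorization q0 :=
        (Nat.Prime.pow_dvd_iff_le_factorization hq0 hn0).mp h1
      have h3 : n.factorization q0 ≤ d.factorization q0 :=
        (Nat.Prime.pow_dvd_iff_le_factorization hq0 hd0).mp hcon
      omega
    have hd_dvd_e0 : d ∣ e0 := (hcmp e0 he0_dvd).resolve_left he0_not_dvd_d
    have hall : ∀ q' : ℕ, q'.Prime → q' ∣ n → q' = q0 := by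
      intro q' hq' hq'n
      by_contra hne'
      have hv' : 0 < n.factorization q' :=
        Nat.Prime.factorization_pos_of_dvd hq' hn0 hq'n
      have he'_dvd : q' ^ (n.factorization q') ∣ n := Nat.ordProj_dvd n q'
      have hq'e' : q' ∣ q' ^ (n.factorization q') := dvd_pow_self q' (by omega)
      rcases hcmp _ he'_dvd with h | h
      · have : q' ∣ e0 := (hq'e'.trans h).trans hd_dvd_e0
        have : q' ∣ q0 := hq'.dvd_of_dvd_pow this
        exact hne' ((Nat.prime_dvd_prime_iff_eq hq' hq0).mp this)
      · have hd1' : d ≠ 1 := by omega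
        have hq00 : d.minFac.Prime := Nat.minFac_prime hd1'
        have h00_e0 : d.minFac ∣ e0 := (Nat.minFac_dvd d).trans hd_dvd_e0
        have h00_q0 : d.minFac = q0 :=
          (Nat.prime_dvd_prime_iff_eq hq00 hq0).mp (hq00.dvd_of_dvd_pow h00_e0)
        have h00_e' : d.minFac ∣ q' ^ (n.factorization q') := (Nat.minFac_dvd d).trans h
        have h00_q' : d.minFac = q' :=
          (Nat.prime_dvd_prime_iff_eq hq00 hq').mp (hq00.dvd_of_dvd_pow h00_e')
        exact hne' (h00_q'.symm.trans h00_q0)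
    have hnpow : n = q0 ^ n.primeFactorsList.length :=
      Nat.eq_prime_pow_of_unique_prime_dvd hn0 (fun hq hd => hall _ hq hd)
    have hsub : ((Subgroup.zpowers w : Subgroup G) : Set G) ⊆ T :=
      fun z' hz' => hpp_sub q0 _ hq0 hnpow z' hz'
    have hTZ : T = ((Subgroup.zpowers w : Subgroup G) : Set G) := by
      apply subset_antisymm
      · intro z' hz'; exact hTsub z' hz'
      · exact hsub
    have hn_eq : n = p ^ r := by
      rw [← hclcard, hTZ, ncard_zpowers_coe]
    have hφ : p ^ (r - 1) * (p - 1) = p ^ r - p ^ s := by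
      rw [← hcard', hn_eq, Nat.totient_prime_pow hp (by omega : 0 < r)]
    have hB : p ^ (r - 1) * (p - 1) + p ^ (r - 1) = p ^ r := by
      have h1 : p - 1 + 1 = p := by omega
      calc p ^ (r - 1) * (p - 1) + p ^ (r - 1) = p ^ (r - 1) * (p - 1 + 1) := by ring
      _ = p ^ (r - 1) * p := by rw [h1]
      _ = p ^ (r - 1 + 1) := (pow_succ p (r - 1)).symm
      _ = p ^ r := by congr 1; omega
    have hY : p ^ (r - 1) = p ^ s := by omega
    have := Nat.pow_right_injective hp2 hY
    omega
end

section
/- Let G be a finite group and X, Y two distinct ⋄-classes of G. If there exist x ∈ X and y ∈ Y with y a power of x, then for every x' ∈ X and y' ∈ Y, y' is a power of x', and no element of X is a power of any element of Y. -/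
lemma mem_zpowers_pos_pow {G : Type*} [Group G] [Fintype G] {a b : G}
    (h : a ∈ Subgroup.zpowers b) : ∃ m : ℕ, 0 < m ∧ a = b ^ m := by
  rw [← mem_powers_iff_mem_zpowers] at h
  obtain ⟨n, hn⟩ := h
  rcases Nat.eq_zero_or_pos n with rfl | hpos
  · refine ⟨orderOf b, orderOf_pos b, ?_⟩
    simp [pow_orderOf_eq_one, ← hn]
  · exact ⟨n, hpos, hn.symm⟩

theorem stmt17 {G : Type*} [Group G] [Fintype G] (x0 y0 : G)
    (hXY : diamondClass x0 ≠ diamondClass y0)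
    (h : ∃ x ∈ diamondClass x0, ∃ y ∈ diamondClass y0, ∃ m : ℕ, 0 < m ∧ y = x ^ m) :
    (∀ x' ∈ diamondClass x0, ∀ y' ∈ diamondClass y0, ∃ m : ℕ, 0 < m ∧ y' = x' ^ m) ∧
      (∀ x' ∈ diamondClass x0, ∀ y' ∈ diamondClass y0, ¬ ∃ m : ℕ, 0 < m ∧ x' = y' ^ m) := by
  obtain ⟨x, hx, y, hy, m, hm, hyx⟩ := h
  have hle : Subgroup.zpowers y0 ≤ Subgroup.zpowers x0 := by
    rw [← hx, ← hy]
    rw [Subgroup.zpowers_le]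
    exact hyx ▸ pow_mem (Subgroup.mem_zpowers x) m
  constructor
  · intro x' hx' y' hy'
    apply mem_zpowers_pos_pow
    rw [hx']
    exact hle (hy' ▸ Subgroup.mem_zpowers y')
  · rintro x' hx' y' hy' ⟨n, hn, hxy'⟩
    apply hXY
    have hle' : Subgroup.zpowers x0 ≤ Subgroup.zpowers y0 := by
      rw [← hx', ← hy', Subgroup.zpowers_le]
      exact hxy' ▸ pow_mem (Subgroup.mem_zpowers y') n
    have : Subgroup.zpowers x0 = Subgroup.zpowers y0 := le_antisymm hle' hle
    unfold diamondClass
    rw [this]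
end
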